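/- Let n ≥ 1, let t_0 < t_f, let A : [t_0, t_f] → ℂ^{n×n} be continuous, let Y_0 ∈ GL_n(ℂ), and let Ω : [t_0, t_f] → ℂ^{n×n} be differentiable with I − Ω(t)/2 and I + Ω(t)/2 invertible for all t ∈ [t_0, t_f]. Define Y(t) = (I − Ω(t)/2)^{-1}(I + Ω(t)/2) Y_0. If Y satisfies the differential equation Y'(t) = A(t) Y(t) for all t ∈ [t_0, t_f], then Ω satisfies Ω'(t) = A(t) − (1/2)[Ω(t), A(t)] − (1/4) Ω(t) A(t) Ω(t) for all t ∈ [t_0, t_f]. -/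

import Mathlib

open scoped Matrix

attribute [local instance] Matrix.frobeniusNormedAddCommGroup Matrix.frobeniusNormedSpace
  Matrix.frobeniusNormedRing

set_option maxHeartbeats 1000000 in
/-- If `Y(t) = Cay(Ω(t)) Y₀` solves `Y' = A(t) Y`, then `Ω` solves the Cayley
differential equation `Ω' = A − (1/2)[Ω, A] − (1/4) Ω A Ω`. -/
theorem cayley_differential_equation
    (n : ℕ) (hn : 1 ≤ n)
    (t0 tf : ℝ) (htt : t0 < tf)
    (A : ℝ → Matrix (Fin n) (Fin n) ℂ) (hA : ContinuousOn A (Set.Icc t0 tf))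
    (Y0 : Matrix (Fin n) (Fin n) ℂ) (hY0 : IsUnit Y0)
    (Ω Ω' : ℝ → Matrix (Fin n) (Fin n) ℂ)
    (hΩdiff : ∀ t ∈ Set.Icc t0 tf, HasDerivAt Ω (Ω' t) t)
    (hinv1 : ∀ t ∈ Set.Icc t0 tf, IsUnit (1 - (1/2 : ℂ) • Ω t))
    (hinv2 : ∀ t ∈ Set.Icc t0 tf, IsUnit (1 + (1/2 : ℂ) • Ω t))
    (hY : ∀ t ∈ Set.Icc t0 tf,
      HasDerivAt (fun s => (1 - (1/2 : ℂ) • Ω s)⁻¹ * (1 + (1/2 : ℂ) • Ω s) * Y0)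
        (A t * ((1 - (1/2 : ℂ) • Ω t)⁻¹ * (1 + (1/2 : ℂ) • Ω t) * Y0)) t) :
    ∀ t ∈ Set.Icc t0 tf,
      Ω' t = A t - (1/2 : ℂ) • (Ω t * A t - A t * Ω t)
        - (1/4 : ℂ) • (Ω t * A t * Ω t) := by
  intro t ht
  letI : NormedAlgebra ℝ (Matrix (Fin n) (Fin n) ℂ) := Matrix.frobeniusNormedAlgebra
  set P := 1 - (1/2 : ℂ) • Ω t with hP
  set Q := 1 + (1/2 : ℂ) • Ω t with hQ
  have hPu := hinv1 t ht
  have hQu := hinv2 t ht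
  -- derivative of the inverse
  have hinvder : HasDerivAt (fun s => (1 - (1/2:ℂ) • Ω s)⁻¹)
      (P⁻¹ * ((1/2:ℂ) • Ω' t) * P⁻¹) t := by
    have hf : HasDerivAt (fun s => 1 - (1/2:ℂ) • Ω s) (-((1/2:ℂ) • Ω' t)) t := by
      have h0 := (hasDerivAt_const t (1 : Matrix (Fin n) (Fin n) ℂ)).sub
        ((hΩdiff t ht).const_smul (1/2:ℂ))
      rw [zero_sub] at h0
      exact h0
    obtain ⟨u, hu⟩ := hPu
    have h1 := (hasFDerivAt_ringInverse (𝕜 := ℝ) u)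
    rw [hu, ← hP] at h1
    have h2 := h1.comp_hasDerivAt t hf
    simp only [Function.comp_def] at h2
    have heq : (fun s => Ring.inverse (1 - (1/2:ℂ) • Ω s))
        = fun s => (1 - (1/2:ℂ) • Ω s)⁻¹ := by
      funext s; rw [Matrix.nonsing_inv_eq_ringInverse]
    rw [heq] at h2
    refine h2.congr_deriv ?_
    simp [mul_assoc, hu, hP]
  have hQder : HasDerivAt (fun s => 1 + (1/2:ℂ) • Ω s) ((1/2:ℂ) • Ω' t) t := by
    have h0 := (hasDerivAt_const t (1 : Matrix (Fin n) (Fin n) ℂ)).add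
      ((hΩdiff t ht).const_smul (1/2:ℂ))
    rw [zero_add] at h0
    exact h0
  have hprod : HasDerivAt (fun s => (1 - (1/2:ℂ) • Ω s)⁻¹ * (1 + (1/2:ℂ) • Ω s) * Y0)
      ((P⁻¹ * ((1/2:ℂ) • Ω' t) * P⁻¹ * Q + P⁻¹ * ((1/2:ℂ) • Ω' t)) * Y0) t :=
    (hinvder.mul hQder).mul_const Y0
  have heq := hprod.unique (hY t ht)
  rw [← hP, ← hQ] at heq
  -- cancel Y0
  have hY0d : IsUnit Y0.det := (Matrix.isUnit_iff_isUnit_det _).mp hY0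
  have hPd : IsUnit P.det := (Matrix.isUnit_iff_isUnit_det _).mp hPu
  have hPP : P * P⁻¹ = 1 := Matrix.mul_nonsing_inv _ hPd
  have hPP' : P⁻¹ * P = 1 := Matrix.nonsing_inv_mul _ hPd
  have heq1 : P⁻¹ * ((1/2:ℂ) • Ω' t) * P⁻¹ * Q + P⁻¹ * ((1/2:ℂ) • Ω' t)
      = A t * (P⁻¹ * Q) := by
    have := congrArg (fun M => M * Y0⁻¹) heq
    simpa [mul_assoc, Matrix.mul_nonsing_inv _ hY0d] using this
  -- multiply on left by P
  have heq2 : (1/2:ℂ) • Ω' t * P⁻¹ * Q + (1/2:ℂ) • Ω' t = P * A t * (P⁻¹ * Q) := by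
    have := congrArg (fun M => P * M) heq1
    simpa [Matrix.mul_add, ← mul_assoc, hPP] using this
  -- commute P⁻¹ and Q
  have hPQ : P * Q = Q * P := by
    simp only [hP, hQ, mul_sub, sub_mul, mul_add, add_mul, one_mul, mul_one,
      smul_mul_assoc, mul_smul_comm, smul_smul, smul_sub, smul_add]
    module
  have hPinvQ : P⁻¹ * Q = Q * P⁻¹ := by
    have : P * (Q * P⁻¹) = P * (P⁻¹ * Q) := by
      rw [← mul_assoc, hPQ, mul_assoc, hPP, mul_one, ← mul_assoc, hPP, one_mul]
    calc P⁻¹ * Q = P⁻¹ * (P * (P⁻¹ * Q)) := by rw [← mul_assoc, hPP', one_mul]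
      _ = P⁻¹ * (P * (Q * P⁻¹)) := by rw [this]
      _ = Q * P⁻¹ := by rw [← mul_assoc, hPP', one_mul]
  -- LHS of heq2 equals Ω' t * P⁻¹
  have hQpP : Q + P = (2:ℂ) • 1 := by
    rw [hP, hQ]; module
  have hlhs : (1/2:ℂ) • Ω' t * P⁻¹ * Q + (1/2:ℂ) • Ω' t = Ω' t * P⁻¹ := by
    have h5 : (1/2:ℂ) • Ω' t * P⁻¹ * Q + (1/2:ℂ) • Ω' t
        = (1/2:ℂ) • (Ω' t * (P⁻¹ * (Q + P))) := by
      conv_rhs => rw [mul_add, hPP']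
      simp [mul_add, smul_mul_assoc, smul_add, mul_assoc]
    rw [h5, hQpP]
    simp [smul_smul, mul_assoc]
  rw [hlhs] at heq2
  -- so Ω' t * P⁻¹ = P * A t * Q * P⁻¹, hence Ω' t = P * A t * Q
  have heq3 : Ω' t = P * A t * Q := by
    have h4 := congrArg (fun M => M * P) heq2
    simpa [mul_assoc, hPinvQ, Matrix.nonsing_inv_mul_cancel_right _ _ hPd] using h4
  rw [heq3, hP, hQ]
  simp only [sub_mul, mul_sub, mul_add, add_mul, one_mul, mul_one,
    smul_mul_assoc, mul_smul_comm, smul_smul, smul_sub, smul_add]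
  module
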